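/- Let N ≥ 1, p > 1, g : ℝ → ℝ nonnegative, nondecreasing and locally Lipschitz, and u a radial solution of -Δ_p u = g(u) on the punctured unit ball with u_r(r) < 0 for all r ∈ (0,1). Then the function r ↦ |u_r(r)|^{p-1} / r is nonincreasing on (0,1]. -/

import Mathlib

open Real Set

/-- For a radial solution of `-Δ_p u = g(u)` on the punctured unit ball with `u_r < 0`,
where `g ≥ 0` is nondecreasing and locally Lipschitz, the function
`r ↦ |u_r(r)|^{p-1} / r` is nonincreasing on `(0,1]`. -/
theorem flux_div_antitone
    (N p : ℝ) (hN : 1 ≤ N) (hp : 1 < p)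
    (g : ℝ → ℝ) (hg0 : ∀ x, 0 ≤ g x) (hgmono : Monotone g)
    (hglip : LocallyLipschitz g)
    (u u' : ℝ → ℝ)
    (hu : ∀ r ∈ Ioc (0:ℝ) 1, HasDerivAt u (u' r) r)
    (hu'neg : ∀ r ∈ Ioc (0:ℝ) 1, u' r < 0)
    (heq : ∀ r ∈ Ioc (0:ℝ) 1,
      HasDerivAt (fun s => s ^ (N - 1) * |u' s| ^ (p - 1))
        (r ^ (N - 1) * g (u r)) r) :
    AntitoneOn (fun r => |u' r| ^ (p - 1) / r) (Ioc (0:ℝ) 1) := by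
  have hN0 : (0:ℝ) < N := lt_of_lt_of_le one_pos hN
  have hNne : N ≠ 0 := ne_of_gt hN0
  set F : ℝ → ℝ := fun s => s ^ (N - 1) * |u' s| ^ (p - 1) with hFdef
  -- u is antitone on Ioc 0 1
  have huanti : AntitoneOn u (Ioc (0:ℝ) 1) := by
    apply antitoneOn_of_deriv_nonpos (convex_Ioc 0 1)
    · exact fun r hr => (hu r hr).continuousAt.continuousWithinAt
    · intro x hx
      rw [interior_Ioc] at hx
      exact (hu x ⟨hx.1, le_of_lt hx.2⟩).differentiableAt.differentiableWithinAt
    · intro x hx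
      rw [interior_Ioc] at hx
      have hx' : x ∈ Ioc (0:ℝ) 1 := ⟨hx.1, le_of_lt hx.2⟩
      rw [(hu x hx').deriv]
      exact le_of_lt (hu'neg x hx')
  -- derivative of  s ↦ F s - c/N * s^N
  have hφderiv : ∀ (c : ℝ), ∀ r ∈ Ioc (0:ℝ) 1,
      HasDerivAt (fun s => F s - c / N * s ^ N) (r ^ (N - 1) * (g (u r) - c)) r := by
    intro c r hr
    have h1 : HasDerivAt (fun s : ℝ => s ^ N) (N * r ^ (N - 1)) r :=
      Real.hasDerivAt_rpow_const (Or.inl (ne_of_gt hr.1))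
    have h2 := (heq r hr).sub (h1.const_mul (c / N))
    refine h2.congr_deriv ?_
    rw [show c / N * (N * r ^ (N - 1)) = c * r ^ (N - 1) by rw [← mul_assoc, div_mul_cancel₀ c hNne]]
    ring
  -- F in convenient form
  have hrw : ∀ r ∈ Ioc (0:ℝ) 1, F r = |u' r| ^ (p - 1) * r ^ N / r := by
    intro r hr
    have : r ^ (N - 1) = r ^ N / r := by
      rw [Real.rpow_sub hr.1, Real.rpow_one]
    rw [hFdef]
    simp only [this]
    ring
  intro a ha b hb hab
  set c := g (u a) with hc
  have ha0 : (0:ℝ) < a := ha.1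
  have hb0 : (0:ℝ) < b := hb.1
  have hA0 : (0:ℝ) < a ^ N := Real.rpow_pos_of_pos ha0 N
  have hB0 : (0:ℝ) < b ^ N := Real.rpow_pos_of_pos hb0 N
  have hFnonneg : ∀ r ∈ Ioc (0:ℝ) 1, 0 ≤ F r := by
    intro r hr
    have h1 : (0:ℝ) ≤ r ^ (N - 1) := Real.rpow_nonneg (le_of_lt hr.1) _
    have h2 : (0:ℝ) ≤ |u' r| ^ (p - 1) := Real.rpow_nonneg (abs_nonneg _) _
    exact mul_nonneg h1 h2
  -- Step A : c/N * a^N ≤ F a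
  have hsub : Ioc (0:ℝ) a ⊆ Ioc (0:ℝ) 1 := Ioc_subset_Ioc le_rfl ha.2
  have hmono : MonotoneOn (fun s => F s - c / N * s ^ N) (Ioc (0:ℝ) a) := by
    apply monotoneOn_of_deriv_nonneg (convex_Ioc 0 a)
    · exact fun r hr => (hφderiv c r (hsub hr)).continuousAt.continuousWithinAt
    · intro x hx
      rw [interior_Ioc] at hx
      exact (hφderiv c x (hsub ⟨hx.1, le_of_lt hx.2⟩)).differentiableAt.differentiableWithinAt
    · intro x hx
      rw [interior_Ioc] at hx
      have hx' : x ∈ Ioc (0:ℝ) 1 := hsub ⟨hx.1, le_of_lt hx.2⟩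
      rw [(hφderiv c x hx').deriv]
      have : c ≤ g (u x) := hgmono (huanti hx' ha (le_of_lt hx.2))
      have h1 : (0:ℝ) ≤ x ^ (N - 1) := Real.rpow_nonneg (le_of_lt hx.1) _
      nlinarith
  have hev : ∀ ε ∈ Ioc (0:ℝ) a, c / N * a ^ N - c / N * ε ^ N ≤ F a := by
    intro ε hε
    have h1 := hmono hε ⟨ha0, le_rfl⟩ hε.2
    have h2 := hFnonneg ε (hsub hε)
    simp only at h1
    linarith
  have h0 : Filter.Tendsto (fun ε : ℝ => ε ^ N) (nhdsWithin 0 (Ioi 0)) (nhds 0) := by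
    have hc0 := (Real.continuousAt_rpow_const 0 N (Or.inr (le_of_lt hN0))).tendsto
    rw [Real.zero_rpow hNne] at hc0
    exact hc0.mono_left nhdsWithin_le_nhds
  have htend : Filter.Tendsto (fun ε : ℝ => c / N * a ^ N - c / N * ε ^ N)
      (nhdsWithin 0 (Ioi 0)) (nhds (c / N * a ^ N)) := by
    have := Filter.Tendsto.sub (tendsto_const_nhds (x := c / N * a ^ N))
      (h0.const_mul (c / N))
    simpa using this
  have hle : c / N * a ^ N ≤ F a :=
    le_of_tendsto htend (by
      filter_upwards [Ioc_mem_nhdsGT ha0] with ε hε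
      exact hev ε hε)
  -- Step B : F b ≤ F a + c/N * (b^N - a^N)
  have hanti : AntitoneOn (fun s => F s - c / N * s ^ N) (Icc a b) := by
    have hsub2 : Icc a b ⊆ Ioc (0:ℝ) 1 := fun x hx => ⟨lt_of_lt_of_le ha0 hx.1, le_trans hx.2 hb.2⟩
    apply antitoneOn_of_deriv_nonpos (convex_Icc a b)
    · exact fun r hr => (hφderiv c r (hsub2 hr)).continuousAt.continuousWithinAt
    · intro x hx
      have hx' : x ∈ Ioc (0:ℝ) 1 := hsub2 (interior_subset hx)
      exact (hφderiv c x hx').differentiableAt.differentiableWithinAt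
    · intro x hx
      rw [interior_Icc] at hx
      have hx' : x ∈ Ioc (0:ℝ) 1 := ⟨lt_trans ha0 hx.1, le_trans (le_of_lt hx.2) hb.2⟩
      rw [(hφderiv c x hx').deriv]
      have : g (u x) ≤ c := hgmono (huanti ha hx' (le_of_lt hx.1))
      have h1 : (0:ℝ) ≤ x ^ (N - 1) := Real.rpow_nonneg (le_of_lt hx'.1) _
      nlinarith
  have hB : F b - c / N * b ^ N ≤ F a - c / N * a ^ N := by
    have := hanti (left_mem_Icc.mpr hab) (right_mem_Icc.mpr hab) hab
    simpa using this
  -- conclude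
  have hd : c / N ≤ |u' a| ^ (p - 1) / a := by
    rw [hrw a ha] at hle
    have e : |u' a| ^ (p - 1) * a ^ N / a = |u' a| ^ (p - 1) / a * a ^ N := by ring
    have h : c / N * a ^ N ≤ |u' a| ^ (p - 1) / a * a ^ N := by rw [← e]; exact hle
    exact le_of_mul_le_mul_right h hA0
  have hAB : a ^ N ≤ b ^ N := Real.rpow_le_rpow (le_of_lt ha0) hab (le_of_lt hN0)
  have hkey : |u' b| ^ (p - 1) / b * b ^ N ≤ |u' a| ^ (p - 1) / a * b ^ N := by
    have h1 : F b ≤ F a + c / N * (b ^ N - a ^ N) := by linarith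
    have h2 : c / N * (b ^ N - a ^ N) ≤ |u' a| ^ (p - 1) / a * (b ^ N - a ^ N) :=
      mul_le_mul_of_nonneg_right hd (sub_nonneg.mpr hAB)
    rw [hrw a ha, hrw b hb] at h1
    calc |u' b| ^ (p - 1) / b * b ^ N = |u' b| ^ (p - 1) * b ^ N / b := by ring
      _ ≤ |u' a| ^ (p - 1) * a ^ N / a + c / N * (b ^ N - a ^ N) := h1
      _ ≤ |u' a| ^ (p - 1) * a ^ N / a + |u' a| ^ (p - 1) / a * (b ^ N - a ^ N) := by linarith
      _ = |u' a| ^ (p - 1) / a * b ^ N := by ring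
  exact le_of_mul_le_mul_right hkey hB0
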